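/- Let a, a_1, ..., a_n, α, β be letters in the alphabet A_k with a_i ≠ a for 1 ≤ i ≤ n and α ≠ β. Then the word τ_a ∘ τ_{a_1} ∘ ⋯ ∘ τ_{a_n}(a) is a prefix of τ_a ∘ τ_{a_1} ∘ ⋯ ∘ τ_{a_n}(αβ). -/

import Mathlib

/-- The Arnoux-Rauzy morphism τ_a on letters: τ_a(a) = a, τ_a(b) = ab for b ≠ a. -/
def tau {A : Type*} [DecidableEq A] (a b : A) : List A :=
  if b = a then [a] else [a, b]

/-- The composition τ_{a₁} ∘ τ_{a₂} ∘ ⋯ ∘ τ_{aₙ} (for the list [a₁,...,aₙ]),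
applied to a letter. -/
def tauComp {A : Type*} [DecidableEq A] : List A → A → List A
  | [], c => [c]
  | b :: l, c => (tauComp l c).flatMap (tau b)

section Aux

variable {A : Type*} [DecidableEq A]

lemma tau_head (b c : A) : ∃ t, tau b c = b :: t := by
  unfold tau; split <;> exact ⟨_, rfl⟩

lemma tau_last (b c : A) : ∃ t, tau b c = t ++ [c] := by
  unfold tau
  split
  · rename_i h; exact ⟨[], by simp [h]⟩
  · exact ⟨[b], rfl⟩

lemma flatMap_head' (b : A) (w r : List A) :
    ∃ t, w.flatMap (tau b) ++ b :: r = b :: t := by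
  cases w with
  | nil => exact ⟨r, by simp⟩
  | cons c w =>
    obtain ⟨t, ht⟩ := tau_head b c
    exact ⟨t ++ w.flatMap (tau b) ++ b :: r, by simp [List.flatMap_cons, ht]⟩

lemma tauComp_last (l : List A) (c : A) : ∃ p, tauComp l c = p ++ [c] := by
  induction l with
  | nil => exact ⟨[], rfl⟩
  | cons b l ih =>
    obtain ⟨p, hp⟩ := ih
    obtain ⟨t, ht⟩ := tau_last b c
    exact ⟨p.flatMap (tau b) ++ t, by simp [tauComp, hp, ht]⟩

lemma mid (b : A) (s : List A) (x y : A) (hxy : x ≠ y) :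
    ∃ t u v, u ≠ v ∧ (s ++ [x, y]).flatMap (tau b) = b :: t ++ [u, v] := by
  by_cases hy : y = b
  · have hx : x ≠ b := hy ▸ hxy
    obtain ⟨t, ht⟩ := flatMap_head' b s []
    refine ⟨t, x, b, hx, ?_⟩
    have : tau b x = [b, x] := by simp [tau, hx]
    have hyy : tau b y = [b] := by simp [tau, hy]
    simp only [List.flatMap_append, List.flatMap_cons, List.flatMap_nil, this, hyy]
    calc s.flatMap (tau b) ++ ([b, x] ++ ([b] ++ []))
        = (s.flatMap (tau b) ++ b :: []) ++ [x, b] := by simp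
      _ = b :: t ++ [x, b] := by rw [ht]
  · obtain ⟨w, hw⟩ := tau_head b x
    obtain ⟨t, ht⟩ := flatMap_head' b s w
    refine ⟨t, b, y, fun h => hy h.symm, ?_⟩
    have hyy : tau b y = [b, y] := by simp [tau, hy]
    simp only [List.flatMap_append, List.flatMap_cons, List.flatMap_nil, hw, hyy]
    calc s.flatMap (tau b) ++ (b :: w ++ ([b, y] ++ []))
        = (s.flatMap (tau b) ++ b :: w) ++ [b, y] := by simp
      _ = b :: t ++ [b, y] := by rw [ht]

lemma key (a : A) (l : List A) (hl : ∀ b ∈ l, b ≠ a) (α β : A) (hαβ : α ≠ β) :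
    ∃ p s x y, x ≠ y ∧ tauComp l a = p ++ [a] ∧
      tauComp l α ++ tauComp l β = p ++ s ++ [x, y] := by
  induction l with
  | nil => exact ⟨[], [], α, β, hαβ, rfl, rfl⟩
  | cons b l ih =>
    have hb : b ≠ a := hl b List.mem_cons_self
    obtain ⟨p, s, x, y, hxy, hpa, hv⟩ := ih (fun c hc => hl c (List.mem_cons_of_mem b hc))
    obtain ⟨t, u, v, huv, hmid⟩ := mid b s x y hxy
    have hba : tau b a = [b, a] := by simp [tau, Ne.symm hb]
    refine ⟨p.flatMap (tau b) ++ [b], t, u, v, huv, ?_, ?_⟩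
    · simp [tauComp, hpa, hba]
    · show (tauComp l α).flatMap (tau b) ++ (tauComp l β).flatMap (tau b) = _
      rw [← List.flatMap_append, hv]
      have : p ++ s ++ [x, y] = p ++ (s ++ [x, y]) := by simp
      rw [this, List.flatMap_append, hmid]
      simp

end Aux

/-- If a_i ≠ a for all i and α ≠ β, then τ_a ∘ τ_{a₁} ∘ ⋯ ∘ τ_{aₙ}(a) is a prefix of
τ_a ∘ τ_{a₁} ∘ ⋯ ∘ τ_{aₙ}(αβ). -/
theorem tauComp_prefix {k : ℕ} (hk : 2 ≤ k) (a α β : Fin k) (l : List (Fin k))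
    (hl : ∀ b ∈ l, b ≠ a) (hαβ : α ≠ β) :
    tauComp (a :: l) a <+: (tauComp (a :: l) α ++ tauComp (a :: l) β) := by
  obtain ⟨p, s, x, y, hxy, hpa, hv⟩ := key a l hl α β hαβ
  obtain ⟨t, u, v, huv, hmid⟩ := mid a s x y hxy
  have haa : tau a a = [a] := by simp [tau]
  refine ⟨t ++ [u, v], ?_⟩
  show (tauComp l a).flatMap (tau a) ++ _ = (tauComp l α).flatMap (tau a) ++ (tauComp l β).flatMap (tau a)
  rw [← List.flatMap_append, hv, hpa]
  have : p ++ s ++ [x, y] = p ++ (s ++ [x, y]) := by simp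
  rw [this, List.flatMap_append, List.flatMap_append, hmid]
  simp [haa]
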